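/- Let P = (X,≺) be a finite poset with |X| = n, and let z₁ ≺ z₂ ≺ z₃ be three distinct elements of X. For integers k,ℓ ≥ 1, the number F(k,ℓ) of linear extensions L with L(z₂) − L(z₁) = k and L(z₃) − L(z₂) = ℓ is positive if and only if all six inequalities hold: b(z₁,z₂) − 1 ≤ k ≤ n + 1 − b(z₁) − b*(z₂), b(z₂,z₃) − 1 ≤ ℓ ≤ n + 1 − b*(z₃) − b(z₂), and b(z₁,z₃) − 1 ≤ k + ℓ ≤ n + 1 − b*(z₃) − b(z₁). -/

import Mathlib

open Finset

set_option linter.unusedSectionVars false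

section Aux

variable {X : Type} [PartialOrder X] [Fintype X] [DecidableEq X]
  [DecidableRel (α := X) (· ≤ ·)]

def lbF (A : Finset X) (z : X) : ℕ := (A.filter (fun u => u ≤ z)).card
def ubF (A : Finset X) (z : X) : ℕ := (A.filter (fun u => z ≤ u)).card
def ivF (A : Finset X) (y z : X) : ℕ := (A.filter (fun u => y ≤ u ∧ u ≤ z)).card

lemma one_le_lbF {A : Finset X} {z : X} (hz : z ∈ A) : 1 ≤ lbF A z :=
  Finset.card_pos.mpr ⟨z, Finset.mem_filter.mpr ⟨hz, le_rfl⟩⟩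

lemma one_le_ubF {A : Finset X} {z : X} (hz : z ∈ A) : 1 ≤ ubF A z :=
  Finset.card_pos.mpr ⟨z, Finset.mem_filter.mpr ⟨hz, le_rfl⟩⟩

lemma ivF_self {A : Finset X} {z : X} (hz : z ∈ A) : ivF A z z = 1 := by
  unfold ivF
  rw [Finset.card_eq_one]
  refine ⟨z, ?_⟩
  ext u
  simp only [Finset.mem_filter, Finset.mem_singleton]
  constructor
  · rintro ⟨-, h1, h2⟩; exact le_antisymm h2 h1
  · rintro rfl; exact ⟨hz, le_rfl, le_rfl⟩

lemma ivF_le_lbF {A : Finset X} {y z : X} : ivF A y z ≤ lbF A z := by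
  apply Finset.card_le_card
  intro u hu
  simp only [Finset.mem_filter] at hu ⊢
  exact ⟨hu.1, hu.2.2⟩

lemma two_le_ivF {A : Finset X} {y z : X} (hy : y ∈ A) (hz : z ∈ A) (h : y < z) :
    2 ≤ ivF A y z := by
  have : ({y, z} : Finset X) ⊆ A.filter (fun u => y ≤ u ∧ u ≤ z) := by
    intro u hu
    simp only [Finset.mem_insert, Finset.mem_singleton] at hu
    rcases hu with rfl | rfl
    · exact Finset.mem_filter.mpr ⟨hy, le_rfl, h.le⟩
    · exact Finset.mem_filter.mpr ⟨hz, h.le, le_rfl⟩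
  calc 2 = ({y, z} : Finset X).card := (Finset.card_pair h.ne).symm
    _ ≤ _ := Finset.card_le_card this

lemma lbF_erase {A : Finset X} {x z : X} (hx : x ∈ A) (h : x ≤ z) :
    lbF (A.erase x) z + 1 = lbF A z := by
  unfold lbF
  have hmem : x ∈ A.filter (fun u => u ≤ z) := Finset.mem_filter.mpr ⟨hx, h⟩
  rw [Finset.filter_erase, Finset.card_erase_of_mem hmem]
  have : 0 < (A.filter (fun u => u ≤ z)).card := Finset.card_pos.mpr ⟨x, hmem⟩
  omega

lemma lbF_erase_not {A : Finset X} {x z : X} (h : ¬ x ≤ z) :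
    lbF (A.erase x) z = lbF A z := by
  unfold lbF
  rw [Finset.filter_erase, Finset.erase_eq_of_notMem]
  simp [Finset.mem_filter, h]

lemma ubF_erase {A : Finset X} {x z : X} (h : ¬ z ≤ x) :
    ubF (A.erase x) z = ubF A z := by
  unfold ubF
  rw [Finset.filter_erase, Finset.erase_eq_of_notMem]
  simp [Finset.mem_filter, h]

lemma ivF_erase {A : Finset X} {x y z : X} (h : ¬ y ≤ x) :
    ivF (A.erase x) y z = ivF A y z := by
  unfold ivF
  rw [Finset.filter_erase, Finset.erase_eq_of_notMem]
  intro hmem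
  exact h (Finset.mem_filter.mp hmem).2.1

lemma findMinBelow (D : Finset X) {u : X} (hu : u ∈ D) :
    ∃ m ∈ D, m ≤ u ∧ ∀ v ∈ D, v ≤ m → v = m := by
  obtain ⟨m, hm, hmin⟩ : ∃ m ∈ D.filter (fun v => v ≤ u), ∀ x ∈ D.filter (fun v => v ≤ u), ¬ x < m := by
    obtain ⟨m, hm⟩ := Finset.exists_minimal (s := D.filter (fun v => v ≤ u))
      ⟨u, Finset.mem_filter.mpr ⟨hu, le_rfl⟩⟩
    exact ⟨m, hm.1, fun x hx => hm.not_lt hx⟩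
  obtain ⟨hmD, hmu⟩ := Finset.mem_filter.mp hm
  refine ⟨m, hmD, hmu, fun v hv hvm => ?_⟩
  by_contra hne
  exact hmin v (Finset.mem_filter.mpr ⟨hv, hvm.trans hmu⟩) (lt_of_le_of_ne hvm hne)

lemma assemble {X : Type} [PartialOrder X] [Fintype X] [DecidableEq X]
    [DecidableRel (α := X) (· ≤ ·)]
    {n : ℕ} {A : Finset X} {x : X} (hx : x ∈ A) (hmin : ∀ u ∈ A, u ≤ x → u = x)
    {f : X → ℕ}
    (hbij : Set.BijOn f ↑(A.erase x) (Set.Icc 1 n))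
    (hmono : ∀ u ∈ A.erase x, ∀ v ∈ A.erase x, u < v → f u < f v) :
    ∃ g : X → ℕ, Set.BijOn g ↑A (Set.Icc 1 (n+1)) ∧
      (∀ u ∈ A, ∀ v ∈ A, u < v → g u < g v) ∧ g x = 1 ∧
      ∀ u ∈ A.erase x, g u = f u + 1 := by
  classical
  set g : X → ℕ := fun u => if u = x then 1 else f u + 1 with hg
  have hval : ∀ u ∈ A.erase x, g u = f u + 1 := by
    intro u hu
    have : u ≠ x := (Finset.mem_erase.mp hu).1
    simp [hg, this]
  have hrange : ∀ u ∈ A.erase x, f u ∈ Set.Icc 1 n := fun u hu => hbij.mapsTo hu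
  have hmem_erase : ∀ u ∈ A, u ≠ x → u ∈ A.erase x := fun u hu hne =>
    Finset.mem_erase.mpr ⟨hne, hu⟩
  refine ⟨g, ⟨?_, ?_, ?_⟩, ?_, by simp [hg], hval⟩
  · -- MapsTo
    intro u hu
    by_cases h : u = x
    · simp [hg, h, Set.mem_Icc]
    · have hu' := hmem_erase u hu h
      have := hrange u hu'
      simp only [Set.mem_Icc] at this ⊢
      rw [hval u hu']
      omega
  · -- InjOn
    intro u hu v hv huv
    by_cases h1 : u = x <;> by_cases h2 : v = x
    · rw [h1, h2]
    · exfalso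
      have hv' := hmem_erase v hv h2
      have := hrange v hv'
      rw [hval v hv'] at huv
      simp only [hg, h1, if_pos] at huv
      simp only [Set.mem_Icc] at this
      omega
    · exfalso
      have hu' := hmem_erase u hu h1
      have := hrange u hu'
      rw [hval u hu'] at huv
      simp only [hg, h2, if_pos] at huv
      simp only [Set.mem_Icc] at this
      omega
    · have hu' := hmem_erase u hu h1
      have hv' := hmem_erase v hv h2
      rw [hval u hu', hval v hv'] at huv
      exact hbij.injOn hu' hv' (by omega)
  · -- SurjOn
    intro m hm
    simp only [Set.mem_Icc] at hm
    by_cases h : m = 1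
    · exact ⟨x, by exact_mod_cast hx, by simp [hg, h]⟩
    · have : m - 1 ∈ Set.Icc 1 n := by simp only [Set.mem_Icc]; omega
      obtain ⟨u, hu, hfu⟩ := hbij.surjOn this
      refine ⟨u, ?_, ?_⟩
      · exact_mod_cast Finset.mem_of_mem_erase (by exact_mod_cast hu)
      · have hu' : u ∈ A.erase x := by exact_mod_cast hu
        rw [hval u hu', hfu]
        omega
  · -- mono
    intro u hu v hv hlt
    have hvx : v ≠ x := by
      intro h
      subst h
      exact absurd (hmin u hu hlt.le ▸ hlt) (lt_irrefl _)
    have hv' := hmem_erase v hv hvx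
    by_cases h1 : u = x
    · have := hrange v hv'
      simp only [Set.mem_Icc] at this
      rw [hval v hv']
      simp only [hg, h1, if_pos]
      omega
    · have hu' := hmem_erase u hu h1
      rw [hval u hu', hval v hv']
      exact Nat.succ_lt_succ (hmono u hu' v hv' hlt)

lemma key {X : Type} [PartialOrder X] [Fintype X] [DecidableEq X]
    [DecidableRel (α := X) (· ≤ ·)] :
    ∀ (n : ℕ) (A : Finset X), A.card = n → ∀ (c : List (X × ℕ)),
    (∀ p ∈ c, p.1 ∈ A ∧ lbF A p.1 ≤ p.2 ∧ p.2 + ubF A p.1 ≤ n + 1) →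
    c.Pairwise (fun p q => p.1 < q.1 ∧ ivF A p.1 q.1 + p.2 ≤ q.2 + 1 ∧
      q.2 + lbF A p.1 + ubF A q.1 ≤ n + 1 + p.2) →
    ∃ f : X → ℕ, Set.BijOn f ↑A (Set.Icc 1 n) ∧
      (∀ u ∈ A, ∀ v ∈ A, u < v → f u < f v) ∧ ∀ p ∈ c, f p.1 = p.2 := by
  intro n
  induction n with
  | zero =>
    intro A hA c hel _
    have hAe : A = ∅ := Finset.card_eq_zero.mp hA
    have hIcc : Set.Icc 1 0 = (∅ : Set ℕ) := Set.Icc_eq_empty (by omega)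
    refine ⟨fun _ => 0, ?_, ?_, ?_⟩
    · rw [hAe, hIcc]; simpa using Set.bijOn_empty (fun _ : X => (0 : ℕ))
    · intro u hu; rw [hAe] at hu; simp at hu
    · intro p hp; exact absurd ((hel p hp).1) (by simp [hAe])
  | succ n IH =>
    intro A hA c hel hpw
    by_cases hA1 : ∃ h t, c = h :: t ∧ h.2 = 1
    · -- Case A: head at position 1
      obtain ⟨h₀, t, rfl, h1⟩ := hA1
      obtain ⟨hxA, hlbx, -⟩ := hel h₀ (List.mem_cons_self)
      have hlb1 : lbF A h₀.1 = 1 := le_antisymm (h1 ▸ hlbx) (one_le_lbF hxA)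
      have hminx : ∀ u ∈ A, u ≤ h₀.1 → u = h₀.1 := by
        intro u hu hux
        exact Finset.card_le_one.mp hlb1.le u (Finset.mem_filter.mpr ⟨hu, hux⟩)
          h₀.1 (Finset.mem_filter.mpr ⟨hxA, le_rfl⟩)
      have hcard : (A.erase h₀.1).card = n := by
        rw [Finset.card_erase_of_mem hxA, hA]; omega
      have hhead : ∀ q ∈ t, h₀.1 < q.1 ∧ ivF A h₀.1 q.1 + h₀.2 ≤ q.2 + 1 ∧
          q.2 + lbF A h₀.1 + ubF A q.1 ≤ (n+1) + 1 + h₀.2 :=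
        fun q hq => List.rel_of_pairwise_cons hpw hq
      have hq2 : ∀ q ∈ t, 2 ≤ q.2 := by
        intro q hq
        have h := hhead q hq
        have hiv := two_le_ivF hxA (hel q (List.mem_cons_of_mem _ hq)).1 h.1
        omega
      have helA : ∀ p' ∈ t.map (fun q => (q.1, q.2 - 1)), p'.1 ∈ A.erase h₀.1 ∧
          lbF (A.erase h₀.1) p'.1 ≤ p'.2 ∧ p'.2 + ubF (A.erase h₀.1) p'.1 ≤ n + 1 := by
        intro p' hp'
        rw [List.mem_map] at hp'
        obtain ⟨q, hq, rfl⟩ := hp'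
        dsimp only
        have hs := hel q (List.mem_cons_of_mem _ hq)
        have hxq : h₀.1 < q.1 := (hhead q hq).1
        have hne : ¬ q.1 ≤ h₀.1 := fun h => absurd (h.trans_lt hxq) (lt_irrefl _)
        refine ⟨Finset.mem_erase.mpr ⟨hxq.ne', hs.1⟩, ?_, ?_⟩
        · have := lbF_erase hxA hxq.le (z := q.1)
          have := hs.2.1
          have := hq2 q hq
          omega
        · rw [ubF_erase hne]
          have := hs.2.2
          have := hq2 q hq
          omega
      have hpwA : (t.map (fun q => (q.1, q.2 - 1))).Pairwise
          (fun p q => p.1 < q.1 ∧ ivF (A.erase h₀.1) p.1 q.1 + p.2 ≤ q.2 + 1 ∧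
            q.2 + lbF (A.erase h₀.1) p.1 + ubF (A.erase h₀.1) q.1 ≤ n + 1 + p.2) := by
        rw [List.pairwise_map]
        refine List.Pairwise.imp_of_mem ?_ (List.pairwise_cons.mp hpw).2
        intro p q hp hq hrel
        dsimp only
        obtain ⟨hlt, hint, hco⟩ := hrel
        have hxp : h₀.1 < p.1 := (hhead p hp).1
        have hxq : h₀.1 < q.1 := (hhead q hq).1
        have hnp : ¬ p.1 ≤ h₀.1 := fun h => absurd (h.trans_lt hxp) (lt_irrefl _)
        have hnq : ¬ q.1 ≤ h₀.1 := fun h => absurd (h.trans_lt hxq) (lt_irrefl _)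
        have h2p := hq2 p hp
        have h2q := hq2 q hq
        refine ⟨hlt, ?_, ?_⟩
        · rw [ivF_erase hnp]; omega
        · rw [ubF_erase hnq]
          have := lbF_erase hxA hxp.le (z := p.1)
          omega
      obtain ⟨f, hbij, hmono, hpos⟩ := IH (A.erase h₀.1) hcard
        (t.map (fun q => (q.1, q.2 - 1))) helA hpwA
      obtain ⟨g, hgbij, hgmono, hgx, hgval⟩ := assemble hxA hminx hbij hmono
      refine ⟨g, hgbij, hgmono, ?_⟩
      intro p hp
      rcases List.mem_cons.mp hp with rfl | hp'
      · exact hgx.trans h1.symm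
      · have hq1 : p.1 ∈ A.erase h₀.1 := Finset.mem_erase.mpr
          ⟨(hhead p hp').1.ne', (hel p hp).1⟩
        have hf := hpos (p.1, p.2 - 1) (List.mem_map_of_mem hp')
        dsimp only at hf
        have := hq2 p hp'
        rw [hgval p.1 hq1, hf]
        omega
    · -- Case B
      have hq2 : ∀ q ∈ c, 2 ≤ q.2 := by
        cases c with
        | nil => intro q hq; simp at hq
        | cons h₀ t =>
          have hne1 : h₀.2 ≠ 1 := fun h => hA1 ⟨h₀, t, rfl, h⟩
          have h₀s := hel h₀ (List.mem_cons_self)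
          have h₀pos : 1 ≤ h₀.2 := le_trans (one_le_lbF h₀s.1) h₀s.2.1
          have h₀2 : 2 ≤ h₀.2 := by omega
          intro q hq
          rcases List.mem_cons.mp hq with rfl | hq'
          · exact h₀2
          · have hrel := List.rel_of_pairwise_cons hpw hq'
            have hiv := two_le_ivF h₀s.1 (hel q hq).1 hrel.1
            have := hrel.2.1
            omega
      have hxex : ∃ x ∈ A, (∀ u ∈ A, u ≤ x → u = x) ∧ (∀ q ∈ c, q.1 ≠ x) ∧
          (∀ q ∈ c, lbF A q.1 = q.2 → x ≤ q.1) := by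
        by_cases hT : ∃ q ∈ c, lbF A q.1 = q.2
        · obtain ⟨q₀, hq₀c, hq₀t⟩ := hT
          obtain ⟨s₀, S', hS'⟩ : ∃ s₀ S',
              c.filter (fun q => decide (lbF A q.1 = q.2)) = s₀ :: S' := by
            cases hc : c.filter (fun q => decide (lbF A q.1 = q.2)) with
            | nil =>
              exfalso
              have : q₀ ∈ c.filter (fun q => decide (lbF A q.1 = q.2)) :=
                List.mem_filter.mpr ⟨hq₀c, by simp [hq₀t]⟩
              rw [hc] at this; simp at this
            | cons a b => exact ⟨a, b, rfl⟩
          have hSpw := List.Pairwise.sublist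
            (l₁ := c.filter (fun q => decide (lbF A q.1 = q.2))) List.filter_sublist hpw
          rw [hS'] at hSpw
          have hs₀S : s₀ ∈ c.filter (fun q => decide (lbF A q.1 = q.2)) := by
            rw [hS']; exact List.mem_cons_self
          have hs₀c : s₀ ∈ c := List.mem_of_mem_filter hs₀S
          have hs₀t : lbF A s₀.1 = s₀.2 := by
            have := (List.mem_filter.mp hs₀S).2
            simpa using this
          have hleast : ∀ q ∈ c, lbF A q.1 = q.2 → s₀.1 ≤ q.1 := by
            intro q hq hqt
            have hqS : q ∈ c.filter (fun q => decide (lbF A q.1 = q.2)) :=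
              List.mem_filter.mpr ⟨hq, by simp [hqt]⟩
            rw [hS'] at hqS
            rcases List.mem_cons.mp hqS with rfl | hq'
            · exact le_rfl
            · exact (List.rel_of_pairwise_cons hSpw hq').1.le
          have hs₀A : s₀.1 ∈ A := (hel s₀ hs₀c).1
          by_cases hgood : ∃ x ∈ A.filter (fun u => u ≤ s₀.1),
              (∀ u ∈ A, u ≤ x → u = x) ∧ ∀ q ∈ c, q.1 ≠ x
          · obtain ⟨x, hxD, hxmin, hxchain⟩ := hgood
            obtain ⟨hxA, hxle⟩ := Finset.mem_filter.mp hxD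
            exact ⟨x, hxA, hxmin, hxchain, fun q hq hqt => hxle.trans (hleast q hq hqt)⟩
          · exfalso
            push_neg at hgood
            obtain ⟨h₀, t, rfl⟩ : ∃ h₀ t, c = h₀ :: t := by
              cases c with
              | nil => simp at hs₀c
              | cons a b => exact ⟨a, b, rfl⟩
            have h₀A : h₀.1 ∈ A := (hel h₀ (List.mem_cons_self)).1
            have hall : ∀ u ∈ A.filter (fun v => v ≤ s₀.1), h₀.1 ≤ u := by
              intro u hu
              obtain ⟨m, hmD, hmu, hminD⟩ := findMinBelow _ hu
              have hmA : m ∈ A := (Finset.mem_filter.mp hmD).1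
              have hmle : m ≤ s₀.1 := (Finset.mem_filter.mp hmD).2
              have hminA : ∀ v ∈ A, v ≤ m → v = m := fun v hv hvm =>
                hminD v (Finset.mem_filter.mpr ⟨hv, hvm.trans hmle⟩) hvm
              obtain ⟨q, hqc, hqm⟩ := hgood m hmD hminA
              rcases List.mem_cons.mp hqc with rfl | hqt'
              · exact hqm ▸ hmu
              · exfalso
                have hlt : h₀.1 < m := hqm ▸ (List.rel_of_pairwise_cons hpw hqt').1
                have := hminA h₀.1 h₀A hlt.le
                exact absurd (this ▸ hlt) (lt_irrefl _)
            have hsub : lbF A s₀.1 ≤ ivF A h₀.1 s₀.1 := by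
              apply Finset.card_le_card
              intro u hu
              have := Finset.mem_filter.mp hu
              exact Finset.mem_filter.mpr ⟨this.1, hall u hu, this.2⟩
            rcases List.mem_cons.mp hs₀c with heq | hs₀t'
            · have h2 := hq2 h₀ (List.mem_cons_self)
              rw [heq] at hsub hs₀t
              rw [ivF_self h₀A] at hsub
              omega
            · have hrel := List.rel_of_pairwise_cons hpw hs₀t'
              have h₀2 := hq2 h₀ (List.mem_cons_self)
              have := hrel.2.1
              omega
        · by_cases hgood : ∃ x ∈ A, (∀ u ∈ A, u ≤ x → u = x) ∧ ∀ q ∈ c, q.1 ≠ x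
          · obtain ⟨x, hxA, hxmin, hxchain⟩ := hgood
            exact ⟨x, hxA, hxmin, hxchain, fun q hq hqt => absurd ⟨q, hq, hqt⟩ hT⟩
          · exfalso
            push_neg at hgood
            have hAne : A.Nonempty := Finset.card_pos.mp (by omega)
            cases c with
            | nil =>
              obtain ⟨m, hm, hmin⟩ : ∃ m ∈ A, ∀ x ∈ A, ¬ x < m := by
                obtain ⟨m, hm⟩ := Finset.exists_minimal hAne
                exact ⟨m, hm.1, fun x hx => hm.not_lt hx⟩
              have hminA : ∀ v ∈ A, v ≤ m → v = m := by
                intro v hv hvm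
                by_contra hne
                exact hmin v hv (lt_of_le_of_ne hvm hne)
              obtain ⟨q, hq, -⟩ := hgood m hm hminA
              simp at hq
            | cons h₀ t =>
              have h₀s := hel h₀ (List.mem_cons_self)
              have hall : ∀ u ∈ A, h₀.1 ≤ u := by
                intro u hu
                obtain ⟨m, hmD, hmu, hminD⟩ := findMinBelow A hu
                obtain ⟨q, hqc, hqm⟩ := hgood m hmD hminD
                rcases List.mem_cons.mp hqc with rfl | hqt'
                · exact hqm ▸ hmu
                · exfalso
                  have hlt : h₀.1 < m := hqm ▸ (List.rel_of_pairwise_cons hpw hqt').1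
                  have := hminD h₀.1 h₀s.1 hlt.le
                  exact absurd (this ▸ hlt) (lt_irrefl _)
              have hub : ubF A h₀.1 = n + 1 := by
                unfold ubF
                rw [Finset.filter_true_of_mem (fun u hu => hall u hu), hA]
              have := h₀s.2.2
              have := hq2 h₀ (List.mem_cons_self)
              omega
      obtain ⟨x, hxA, hxmin, hxchain, hxtight⟩ := hxex
      have hcard : (A.erase x).card = n := by
        rw [Finset.card_erase_of_mem hxA, hA]; omega
      have helB : ∀ p' ∈ c.map (fun q => (q.1, q.2 - 1)), p'.1 ∈ A.erase x ∧
          lbF (A.erase x) p'.1 ≤ p'.2 ∧ p'.2 + ubF (A.erase x) p'.1 ≤ n + 1 := by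
        intro p' hp'
        rw [List.mem_map] at hp'
        obtain ⟨q, hq, rfl⟩ := hp'
        dsimp only
        have hs := hel q hq
        have h2 := hq2 q hq
        have hne := hxchain q hq
        have hnqx : ¬ q.1 ≤ x := fun h => hne (hxmin q.1 hs.1 h)
        refine ⟨Finset.mem_erase.mpr ⟨hne, hs.1⟩, ?_, ?_⟩
        · by_cases hxq : x ≤ q.1
          · have := lbF_erase hxA hxq (z := q.1)
            have := hs.2.1
            omega
          · rw [lbF_erase_not hxq]
            have hnt : lbF A q.1 ≠ q.2 := fun h => hxq (hxtight q hq h)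
            have := hs.2.1
            omega
        · rw [ubF_erase hnqx]
          have := hs.2.2
          have := hq2 q hq
          omega
      have hpwB : (c.map (fun q => (q.1, q.2 - 1))).Pairwise
          (fun p q => p.1 < q.1 ∧ ivF (A.erase x) p.1 q.1 + p.2 ≤ q.2 + 1 ∧
            q.2 + lbF (A.erase x) p.1 + ubF (A.erase x) q.1 ≤ n + 1 + p.2) := by
        rw [List.pairwise_map]
        refine List.Pairwise.imp_of_mem ?_ hpw
        intro p q hp hq hrel
        dsimp only
        obtain ⟨hlt, hint, hco⟩ := hrel
        have hsp := hel p hp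
        have hsq := hel q hq
        have h2p := hq2 p hp
        have h2q := hq2 q hq
        have hnqp : ¬ p.1 ≤ x := fun h => hxchain p hp (hxmin p.1 hsp.1 h)
        have hnqq : ¬ q.1 ≤ x := fun h => hxchain q hq (hxmin q.1 hsq.1 h)
        refine ⟨hlt, ?_, ?_⟩
        · rw [ivF_erase hnqp]; omega
        · rw [ubF_erase hnqq]
          by_cases hxp : x ≤ p.1
          · have := lbF_erase hxA hxp (z := p.1)
            omega
          · rw [lbF_erase_not hxp]
            have hnt : lbF A p.1 ≠ p.2 := fun h => hxp (hxtight p hp h)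
            have := hsp.2.1
            have := hsq.2.2
            omega
      obtain ⟨f, hbij, hmono, hpos⟩ := IH (A.erase x) hcard
        (c.map (fun q => (q.1, q.2 - 1))) helB hpwB
      obtain ⟨g, hgbij, hgmono, hgx, hgval⟩ := assemble hxA hxmin hbij hmono
      refine ⟨g, hgbij, hgmono, ?_⟩
      intro p hp
      have hq1 : p.1 ∈ A.erase x := Finset.mem_erase.mpr ⟨hxchain p hp, (hel p hp).1⟩
      have hf := hpos (p.1, p.2 - 1) (List.mem_map_of_mem hp)
      dsimp only at hf
      have := hq2 p hp
      rw [hgval p.1 hq1, hf]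
      omega

lemma natCard_subtype_eq_filter {X : Type} [Fintype X] (p : X → Prop) [DecidablePred p] :
    Nat.card {u : X // p u} = (Finset.univ.filter p).card := by
  rw [Nat.card_eq_fintype_card, Fintype.card_subtype]

lemma lb_add_ub_le {X : Type} [PartialOrder X] [Fintype X] [DecidableEq X]
    [DecidableRel (α := X) (· ≤ ·)] (y z : X) :
    lbF (Finset.univ : Finset X) z + ubF (Finset.univ : Finset X) y ≤
      Fintype.card X + ivF (Finset.univ : Finset X) y z := by
  classical
  have hkey := Finset.card_union_add_card_inter
    (Finset.univ.filter (fun u : X => u ≤ z)) (Finset.univ.filter (fun u : X => y ≤ u))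
  have hint : (Finset.univ.filter (fun u : X => u ≤ z)) ∩
      (Finset.univ.filter (fun u : X => y ≤ u)) =
      Finset.univ.filter (fun u : X => y ≤ u ∧ u ≤ z) := by
    ext u
    simp only [Finset.mem_inter, Finset.mem_filter, Finset.mem_univ, true_and]
    tauto
  have hun : ((Finset.univ.filter (fun u : X => u ≤ z)) ∪
      (Finset.univ.filter (fun u : X => y ≤ u))).card ≤ Fintype.card X := by
    rw [← Finset.card_univ]
    exact Finset.card_le_univ _
  rw [hint] at hkey
  unfold lbF ubF ivF
  omega

lemma card_le_of_maps_Icc {X : Type} [Fintype X] {N : ℕ} (L : X ≃ Fin N) (p : X → Prop)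
    (a b : ℕ) (h : ∀ u, p u → (L u : ℕ) ∈ Finset.Icc a b) :
    Nat.card {u : X // p u} ≤ b + 1 - a := by
  have hinj : Function.Injective
      (fun u : {u : X // p u} => (⟨(L u.1 : ℕ), h u.1 u.2⟩ : (Finset.Icc a b : Finset ℕ))) := by
    intro u v huv
    have h1 : (L u.1 : ℕ) = (L v.1 : ℕ) := congrArg Subtype.val huv
    exact Subtype.ext (L.injective (Fin.val_injective h1))
  have h2 := Nat.card_le_card_of_injective _ hinj
  rwa [Nat.card_eq_finsetCard, Nat.card_Icc] at h2

end Aux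

/-- The number of linear extensions `L` of a finite poset `X`
(order-preserving bijections `X ≃ Fin (card X)`) such that
`L z₂ − L z₁ = k` and `L z₃ − L z₂ = l`. -/
noncomputable def F (X : Type) [PartialOrder X] [Fintype X] (z₁ z₂ z₃ : X) (k l : ℕ) : ℕ :=
  Nat.card {L : X ≃ Fin (Fintype.card X) // (∀ a b : X, a < b → L a < L b) ∧
    (L z₂ : ℕ) = (L z₁ : ℕ) + k ∧ (L z₃ : ℕ) = (L z₂ : ℕ) + l}

theorem vanishing_characterization (X : Type) [PartialOrder X] [Fintype X]
    (n : ℕ) (hn : Fintype.card X = n)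
    (z₁ z₂ z₃ : X) (h12 : z₁ < z₂) (h23 : z₂ < z₃)
    (k l : ℕ) (hk : 1 ≤ k) (hl : 1 ≤ l) :
    0 < F X z₁ z₂ z₃ k l ↔
      (Nat.card {u : X // z₁ ≤ u ∧ u ≤ z₂} ≤ k + 1 ∧
        k + Nat.card {u : X // u ≤ z₁} + Nat.card {u : X // z₂ ≤ u} ≤ n + 1 ∧
       Nat.card {u : X // z₂ ≤ u ∧ u ≤ z₃} ≤ l + 1 ∧
        l + Nat.card {u : X // z₃ ≤ u} + Nat.card {u : X // u ≤ z₂} ≤ n + 1 ∧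
       Nat.card {u : X // z₁ ≤ u ∧ u ≤ z₃} ≤ k + l + 1 ∧
        k + l + Nat.card {u : X // z₃ ≤ u} + Nat.card {u : X // u ≤ z₁} ≤ n + 1) := by
  letI : DecidableEq X := Classical.decEq X
  letI : DecidableRel (α := X) (· ≤ ·) := fun _ _ => Classical.propDecidable _
  subst hn
  have hFin : Finite {L : X ≃ Fin (Fintype.card X) // (∀ a b : X, a < b → L a < L b) ∧
      (L z₂ : ℕ) = (L z₁ : ℕ) + k ∧ (L z₃ : ℕ) = (L z₂ : ℕ) + l} := by
    have : Finite (X ≃ Fin (Fintype.card X)) :=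
      Finite.of_injective (fun e => (e : X → Fin (Fintype.card X)))
        (fun e₁ e₂ h => Equiv.coe_fn_injective h)
    exact Subtype.finite
  have hN1 : 1 ≤ Fintype.card X := Fintype.card_pos_iff.mpr ⟨z₁⟩
  constructor
  · -- necessity
    intro hF
    obtain ⟨⟨L, hmono, h2, h3⟩⟩ := (Nat.card_pos_iff.mp hF).1
    have hmle : ∀ a b : X, a ≤ b → (L a : ℕ) ≤ (L b : ℕ) := by
      intro a b hab
      rcases eq_or_lt_of_le hab with rfl | h
      · exact le_rfl
      · exact (hmono _ _ h).le
    have hval : ∀ u : X, (L u : ℕ) ≤ Fintype.card X - 1 :=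
      fun u => Nat.le_pred_of_lt (L u).2
    have hi12 : Nat.card {u : X // z₁ ≤ u ∧ u ≤ z₂} ≤ ((L z₁ : ℕ) + k) + 1 - (L z₁ : ℕ) := by
      apply card_le_of_maps_Icc L
      intro u hu
      rw [Finset.mem_Icc]
      exact ⟨hmle _ _ hu.1, h2 ▸ hmle _ _ hu.2⟩
    have hi23 : Nat.card {u : X // z₂ ≤ u ∧ u ≤ z₃} ≤ ((L z₂ : ℕ) + l) + 1 - (L z₂ : ℕ) := by
      apply card_le_of_maps_Icc L
      intro u hu
      rw [Finset.mem_Icc]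
      exact ⟨hmle _ _ hu.1, h3 ▸ hmle _ _ hu.2⟩
    have hi13 : Nat.card {u : X // z₁ ≤ u ∧ u ≤ z₃} ≤ ((L z₁ : ℕ) + k + l) + 1 - (L z₁ : ℕ) := by
      apply card_le_of_maps_Icc L
      intro u hu
      rw [Finset.mem_Icc]
      refine ⟨hmle _ _ hu.1, ?_⟩
      have := hmle _ _ hu.2
      omega
    have hb1 : Nat.card {u : X // u ≤ z₁} ≤ (L z₁ : ℕ) + 1 - 0 := by
      apply card_le_of_maps_Icc L
      intro u hu
      rw [Finset.mem_Icc]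
      exact ⟨Nat.zero_le _, hmle _ _ hu⟩
    have hb2 : Nat.card {u : X // u ≤ z₂} ≤ (L z₂ : ℕ) + 1 - 0 := by
      apply card_le_of_maps_Icc L
      intro u hu
      rw [Finset.mem_Icc]
      exact ⟨Nat.zero_le _, hmle _ _ hu⟩
    have hu2 : Nat.card {u : X // z₂ ≤ u} ≤ (Fintype.card X - 1) + 1 - (L z₂ : ℕ) := by
      apply card_le_of_maps_Icc L
      intro u hu
      rw [Finset.mem_Icc]
      exact ⟨hmle _ _ hu, hval u⟩
    have hu3 : Nat.card {u : X // z₃ ≤ u} ≤ (Fintype.card X - 1) + 1 - (L z₃ : ℕ) := by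
      apply card_le_of_maps_Icc L
      intro u hu
      rw [Finset.mem_Icc]
      exact ⟨hmle _ _ hu, hval u⟩
    have hv3 := hval z₃
    refine ⟨by omega, by omega, by omega, by omega, by omega, by omega⟩
  · -- sufficiency
    rintro ⟨H1, H2, H3, H4, H5, H6⟩
    have e12 : Nat.card {u : X // z₁ ≤ u ∧ u ≤ z₂} = ivF (Finset.univ : Finset X) z₁ z₂ :=
      natCard_subtype_eq_filter _
    have e23 : Nat.card {u : X // z₂ ≤ u ∧ u ≤ z₃} = ivF (Finset.univ : Finset X) z₂ z₃ :=
      natCard_subtype_eq_filter _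
    have e13 : Nat.card {u : X // z₁ ≤ u ∧ u ≤ z₃} = ivF (Finset.univ : Finset X) z₁ z₃ :=
      natCard_subtype_eq_filter _
    have eb1 : Nat.card {u : X // u ≤ z₁} = (lbF (Finset.univ : Finset X) z₁) := natCard_subtype_eq_filter _
    have eb2 : Nat.card {u : X // u ≤ z₂} = (lbF (Finset.univ : Finset X) z₂) := natCard_subtype_eq_filter _
    have eu2 : Nat.card {u : X // z₂ ≤ u} = (ubF (Finset.univ : Finset X) z₂) := natCard_subtype_eq_filter _
    have eu3 : Nat.card {u : X // z₃ ≤ u} = (ubF (Finset.univ : Finset X) z₃) := natCard_subtype_eq_filter _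
    rw [e12] at H1
    rw [e23] at H3
    rw [e13] at H5
    rw [eb1, eu2] at H2
    rw [eu3, eb2] at H4
    rw [eu3, eb1] at H6
    have hmem : ∀ u : X, u ∈ (Finset.univ : Finset X) := fun u => Finset.mem_univ u
    have f1 := lb_add_ub_le (X := X) z₁ z₁
    have f2 := lb_add_ub_le (X := X) z₂ z₂
    have f3 := lb_add_ub_le (X := X) z₃ z₃
    rw [ivF_self (hmem z₁)] at f1
    rw [ivF_self (hmem z₂)] at f2
    rw [ivF_self (hmem z₃)] at f3
    have g12 := lb_add_ub_le (X := X) z₁ z₂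
    have g23 := lb_add_ub_le (X := X) z₂ z₃
    have g13 := lb_add_ub_le (X := X) z₁ z₃
    have hBpos : 1 ≤ (lbF (Finset.univ : Finset X) z₁) := one_le_lbF (hmem z₁)
    set p := max (max (lbF (Finset.univ : Finset X) z₁) ((lbF (Finset.univ : Finset X) z₂) - k)) ((lbF (Finset.univ : Finset X) z₃) - k - l) with hp
    have hp1 : (lbF (Finset.univ : Finset X) z₁) ≤ p := le_trans (le_max_left _ _) (le_max_left _ _)
    have hp2 : (lbF (Finset.univ : Finset X) z₂) - k ≤ p := le_trans (le_max_right _ _) (le_max_left _ _)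
    have hp3 : (lbF (Finset.univ : Finset X) z₃) - k - l ≤ p := le_max_right _ _
    have hpcases : p = (lbF (Finset.univ : Finset X) z₁) ∨ p = (lbF (Finset.univ : Finset X) z₂) - k ∨ p = (lbF (Finset.univ : Finset X) z₃) - k - l := by
      rcases max_choice (max (lbF (Finset.univ : Finset X) z₁) ((lbF (Finset.univ : Finset X) z₂) - k)) ((lbF (Finset.univ : Finset X) z₃) - k - l) with h | h
      · rcases max_choice (lbF (Finset.univ : Finset X) z₁) ((lbF (Finset.univ : Finset X) z₂) - k) with h' | h'
        · left; rw [hp, h, h']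
        · right; left; rw [hp, h, h']
      · right; right; rw [hp, h]
    have hub1 : p + (ubF (Finset.univ : Finset X) z₁) ≤ Fintype.card X + 1 := by
      rcases hpcases with h | h | h <;> omega
    have hub2 : p + k + (ubF (Finset.univ : Finset X) z₂) ≤ Fintype.card X + 1 := by
      rcases hpcases with h | h | h <;> omega
    have hub3 : p + k + l + (ubF (Finset.univ : Finset X) z₃) ≤ Fintype.card X + 1 := by
      rcases hpcases with h | h | h <;> omega
    have hel : ∀ q ∈ [(z₁, p), (z₂, p + k), (z₃, p + k + l)],
        q.1 ∈ (Finset.univ : Finset X) ∧ lbF Finset.univ q.1 ≤ q.2 ∧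
          q.2 + ubF Finset.univ q.1 ≤ Fintype.card X + 1 := by
      intro q hq
      simp only [List.mem_cons, List.not_mem_nil, or_false] at hq
      rcases hq with rfl | rfl | rfl <;>
        refine ⟨hmem _, ?_, ?_⟩ <;> (dsimp only; omega)
    have hpw : List.Pairwise (fun q r : X × ℕ => q.1 < r.1 ∧
        ivF (Finset.univ : Finset X) q.1 r.1 + q.2 ≤ r.2 + 1 ∧
        r.2 + lbF Finset.univ q.1 + ubF Finset.univ r.1 ≤ Fintype.card X + 1 + q.2)
        [(z₁, p), (z₂, p + k), (z₃, p + k + l)] := by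
      rw [List.pairwise_cons, List.pairwise_cons]
      refine ⟨?_, ?_, ?_⟩
      · intro r hr
        simp only [List.mem_cons, List.not_mem_nil, or_false] at hr
        rcases hr with rfl | rfl
        · refine ⟨h12, ?_, ?_⟩ <;> (dsimp only; omega)
        · refine ⟨h12.trans h23, ?_, ?_⟩ <;> (dsimp only; omega)
      · intro r hr
        simp only [List.mem_singleton] at hr
        subst hr
        refine ⟨h23, ?_, ?_⟩ <;> (dsimp only; omega)
      · exact List.pairwise_singleton _ _
    obtain ⟨f, hbij, hmono, hpos⟩ := key (Fintype.card X) Finset.univ Finset.card_univ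
      [(z₁, p), (z₂, p + k), (z₃, p + k + l)] hel hpw
    have hfmem : ∀ u : X, f u ∈ Set.Icc 1 (Fintype.card X) := by
      intro u
      exact hbij.mapsTo (by simp)
    have hfz₁ : f z₁ = p := hpos (z₁, p) (by simp)
    have hfz₂ : f z₂ = p + k := hpos (z₂, p + k) (by simp)
    have hfz₃ : f z₃ = p + k + l := hpos (z₃, p + k + l) (by simp)
    have hgval : ∀ u : X, f u - 1 < Fintype.card X := by
      intro u
      have := hfmem u
      simp only [Set.mem_Icc] at this
      omega
    set g : X → Fin (Fintype.card X) := fun u => ⟨f u - 1, hgval u⟩ with hg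
    have hginj : Function.Injective g := by
      intro u v huv
      have h1 := hfmem u
      have h2 := hfmem v
      simp only [Set.mem_Icc] at h1 h2
      have h3 : f u - 1 = f v - 1 := congrArg Fin.val huv
      exact hbij.injOn (by simp) (by simp) (by omega)
    have hgbij : Function.Bijective g :=
      (Fintype.bijective_iff_injective_and_card g).mpr ⟨hginj, by simp⟩
    have hp0 : 1 ≤ p := le_trans hBpos hp1
    refine Nat.card_pos_iff.mpr ⟨⟨⟨Equiv.ofBijective g hgbij, ?_, ?_, ?_⟩⟩, hFin⟩
    · intro a b hab
      have hfab := hmono a (hmem a) b (hmem b) hab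
      have h1 := hfmem a
      simp only [Set.mem_Icc] at h1
      show g a < g b
      rw [Fin.lt_def]
      show f a - 1 < f b - 1
      omega
    · show ((g z₂ : ℕ)) = ((g z₁ : ℕ)) + k
      show f z₂ - 1 = (f z₁ - 1) + k
      rw [hfz₁, hfz₂]
      omega
    · show ((g z₃ : ℕ)) = ((g z₂ : ℕ)) + l
      show f z₃ - 1 = (f z₂ - 1) + l
      rw [hfz₂, hfz₃]
      omega
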